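/- Define, for natural numbers j ≤ p and real r > 0, λ^p_j(r) := (p+1) · (p choose j) · ∫_{0}^{r²} t^j / (1+t)^{p+2} dt. Then for every j with 0 ≤ j ≤ p one has (r²/(1+r²))^{p+1} ≤ λ^p_j(r) ≤ 1 − (1+r²)^{-(p+1)}; moreover λ^p_0(r) = 1 − (1+r²)^{-(p+1)} and λ^p_p(r) = (r²/(1+r²))^{p+1}. In particular the maximum of λ^p_j(r) over j is attained at j = 0 and the minimum at j = p. -/

import Mathlib

open MeasureTheory

/-- The eigenvalue `λ^p_j(r)` of the Toeplitz operator with symbol the indicator of the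
disc of radius `r` on `ℂP¹`, in the orthonormal monomial basis. -/
noncomputable def toeplitzIndicatorEigenvalue (p j : ℕ) (r : ℝ) : ℝ :=
  ((p : ℝ) + 1) * (p.choose j) * ∫ t in (0 : ℝ)..(r ^ 2), t ^ j / (1 + t) ^ (p + 2)

namespace ToeplitzAux

lemma one_add_pos (s t : ℝ) (hs : 0 ≤ s) (ht : t ∈ Set.uIcc (0:ℝ) s) : (0:ℝ) < 1 + t := by
  rw [Set.uIcc_of_le hs] at ht
  linarith [ht.1]

lemma integrable_aux (s : ℝ) (hs : 0 ≤ s) (f : ℝ → ℝ) (hf : Continuous f) (k : ℕ) :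
    IntervalIntegrable (fun t => f t * ((1+t)^k)⁻¹) volume 0 s := by
  apply ContinuousOn.intervalIntegrable
  apply hf.continuousOn.mul
  apply ContinuousOn.inv₀ (by fun_prop)
  intro t ht
  exact pow_ne_zero _ (one_add_pos s t hs ht).ne'

lemma ftc_rec (p j : ℕ) (s : ℝ) (hs : 0 ≤ s) :
    ∫ t in (0:ℝ)..s, (((j:ℝ)+1) * t^j - ((p:ℝ)-(j:ℝ)) * t^(j+1)) * ((1+t)^(p+2))⁻¹
      = s^(j+1) * ((1+s)^(p+1))⁻¹ := by
  have h := intervalIntegral.integral_eq_sub_of_hasDerivAt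
    (f := fun t : ℝ => t^(j+1) * ((1+t)^(p+1))⁻¹)
    (f' := fun t : ℝ => (((j:ℝ)+1) * t^j - ((p:ℝ)-(j:ℝ)) * t^(j+1)) * ((1+t)^(p+2))⁻¹)
    (a := 0) (b := s) ?_ ?_
  · rw [h]; simp
  · intro t ht
    have h1 : (0:ℝ) < 1 + t := one_add_pos s t hs ht
    have hd1 : HasDerivAt (fun t : ℝ => 1 + t) 1 t := by
      simpa using (hasDerivAt_id t).const_add 1
    have hd2 := hd1.pow (p+1)
    have hd3 := hd2.inv (pow_ne_zero _ h1.ne')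
    have hd4 := (hasDerivAt_pow (j+1) t).mul hd3
    convert hd4 using 1
    case e'_4 => rfl
    case e'_8 => funext x; simp [Pi.pow_apply]
    case e'_9 =>
      simp only [Pi.pow_apply, Pi.inv_apply]
      push_cast
      field_simp
      ring
  · exact integrable_aux s hs _ (by continuity) _

lemma ftc_zero (p : ℕ) (s : ℝ) (hs : 0 ≤ s) :
    ((p:ℝ)+1) * ∫ t in (0:ℝ)..s, ((1+t)^(p+2))⁻¹ = 1 - ((1+s)^(p+1))⁻¹ := by
  rw [← intervalIntegral.integral_const_mul]
  have h := intervalIntegral.integral_eq_sub_of_hasDerivAt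
    (f := fun t : ℝ => -((1+t)^(p+1))⁻¹)
    (f' := fun t : ℝ => ((p:ℝ)+1) * ((1+t)^(p+2))⁻¹)
    (a := 0) (b := s) ?_ ?_
  · rw [h]; simp only [add_zero, one_pow, inv_one]; ring
  · intro t ht
    have h1 : (0:ℝ) < 1 + t := one_add_pos s t hs ht
    have hd1 : HasDerivAt (fun t : ℝ => 1 + t) 1 t := by
      simpa using (hasDerivAt_id t).const_add 1
    have hd2 := hd1.pow (p+1)
    have hd3 := (hd2.inv (pow_ne_zero _ h1.ne')).neg
    convert hd3 using 1
    · funext x; simp [Pi.pow_apply]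
    simp only [Pi.pow_apply]
    push_cast
    field_simp
    ring
  · exact integrable_aux s hs _ (by continuity) _

lemma A_rec (p j : ℕ) (s : ℝ) (hs : 0 ≤ s) :
    ((j:ℝ)+1) * (∫ t in (0:ℝ)..s, t^j * ((1+t)^(p+2))⁻¹)
      - ((p:ℝ)-(j:ℝ)) * (∫ t in (0:ℝ)..s, t^(j+1) * ((1+t)^(p+2))⁻¹)
      = s^(j+1) * ((1+s)^(p+1))⁻¹ := by
  rw [← ftc_rec p j s hs, ← intervalIntegral.integral_const_mul,
    ← intervalIntegral.integral_const_mul,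
    ← intervalIntegral.integral_sub
      ((integrable_aux s hs _ (by continuity) _).const_mul _)
      ((integrable_aux s hs _ (by continuity) _).const_mul _)]
  apply intervalIntegral.integral_congr
  intro t _
  ring

end ToeplitzAux

open ToeplitzAux in
/-- Bounds on the eigenvalues: the maximum `1 - (1+r²)^{-(p+1)}` is attained at `j = 0`
and the minimum `(r²/(1+r²))^{p+1}` is attained at `j = p`. -/
theorem toeplitz_indicator_eigenvalue_bounds (p j : ℕ) (hj : j ≤ p) (r : ℝ) (hr : 0 < r) :
    (r ^ 2 / (1 + r ^ 2)) ^ (p + 1) ≤ toeplitzIndicatorEigenvalue p j r ∧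
    toeplitzIndicatorEigenvalue p j r ≤ 1 - ((1 + r ^ 2) ^ (p + 1))⁻¹ ∧
    toeplitzIndicatorEigenvalue p 0 r = 1 - ((1 + r ^ 2) ^ (p + 1))⁻¹ ∧
    toeplitzIndicatorEigenvalue p p r = (r ^ 2 / (1 + r ^ 2)) ^ (p + 1) := by
  have hs : (0:ℝ) ≤ r ^ 2 := by positivity
  have h1s : (0:ℝ) < 1 + r ^ 2 := by positivity
  have hval : ∀ k, toeplitzIndicatorEigenvalue p k r
      = ((p:ℝ)+1) * (p.choose k) * ∫ t in (0:ℝ)..(r^2), t^k * ((1+t)^(p+2))⁻¹ := by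
    intro k
    simp [toeplitzIndicatorEigenvalue, div_eq_mul_inv]
  -- value at j = 0
  have hzero : toeplitzIndicatorEigenvalue p 0 r = 1 - ((1 + r ^ 2) ^ (p + 1))⁻¹ := by
    rw [hval, Nat.choose_zero_right]
    have := ftc_zero p (r^2) hs
    simpa using this
  -- value at j = p
  have hmin : toeplitzIndicatorEigenvalue p p r = (r ^ 2 / (1 + r ^ 2)) ^ (p + 1) := by
    rw [hval, Nat.choose_self]
    have hA := A_rec p p (r^2) hs
    simp only [sub_self, zero_mul, sub_zero] at hA
    rw [div_pow, div_eq_mul_inv]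
    push_cast
    simpa [mul_assoc] using hA
  -- monotone step
  have hstep : ∀ k, k < p →
      toeplitzIndicatorEigenvalue p (k+1) r ≤ toeplitzIndicatorEigenvalue p k r := by
    intro k hk
    have hA := A_rec p k (r^2) hs
    have hch : ((k:ℝ)+1) * (p.choose (k+1)) = ((p:ℝ)-(k:ℝ)) * (p.choose k) := by
      have h := Nat.choose_succ_right_eq p k
      have hc := congrArg (Nat.cast : ℕ → ℝ) h
      push_cast [Nat.cast_sub hk.le] at hc
      linarith
    rw [hval, hval]
    set Ak := ∫ t in (0:ℝ)..(r^2), t^k * ((1+t)^(p+2))⁻¹ with hAk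
    set Ak1 := ∫ t in (0:ℝ)..(r^2), t^(k+1) * ((1+t)^(p+2))⁻¹ with hAk1
    have key : ((k:ℝ)+1) * (((p:ℝ)+1) * (p.choose k) * Ak - ((p:ℝ)+1) * (p.choose (k+1)) * Ak1)
        = ((p:ℝ)+1) * (p.choose k) * ((r^2)^(k+1) * ((1+r^2)^(p+1))⁻¹) := by
      rw [← hA]
      linear_combination (-((p:ℝ)+1) * Ak1) * hch
    have hrhs : (0:ℝ) ≤ ((p:ℝ)+1) * (p.choose k) * ((r^2)^(k+1) * ((1+r^2)^(p+1))⁻¹) := by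
      positivity
    have hk1 : (0:ℝ) < (k:ℝ)+1 := by positivity
    nlinarith [key, hrhs, hk1]
  have hmono : ∀ a b : ℕ, a ≤ b → b ≤ p →
      toeplitzIndicatorEigenvalue p b r ≤ toeplitzIndicatorEigenvalue p a r := by
    intro a b hab hbp
    induction b, hab using Nat.le_induction with
    | base => exact le_refl _
    | succ n hn ih => exact (hstep n (by omega)).trans (ih (by omega))
  refine ⟨?_, ?_, hzero, hmin⟩
  · rw [← hmin]; exact hmono j p hj le_rfl
  · rw [← hzero]; exact hmono 0 j (Nat.zero_le _) hj
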